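/- arXiv:1507.08821 — 3 statements merged into one kernel-verified Lean document; each statement's English description precedes it below -/
import Mathlib

section
/- Let A be a Poisson algebra, let I be a coisotropic ideal of the underlying commutative ring of A, and let B_I = {f ∈ A : ⁅f, i⁆ ∈ I for all i ∈ I}, viewed as a commutative ring in which I is an ideal. Then the quotient commutative ring B_I/I carries a bracket, induced by the bracket of A (i.e., ⁅f + I, g + I⁆ = ⁅f, g⁆ + I for f, g ∈ B_I), which is additive in each argument, antisymmetric, satisfies the Jacobi identity, and satisfies the Leibniz rule; hence B_I/I is a Poisson algebra and the quotient map B_I → B_I/I preserves products and brackets. -/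
set_option maxHeartbeats 1000000
set_option synthInstance.maxHeartbeats 400000


/-- Let `A` be a Poisson algebra, `I` a coisotropic ideal of the underlying
commutative ring, and `B` the subring of `A` whose underlying set is
`B_I = {f ∈ A : ⁅f, i⁆ ∈ I for all i ∈ I}`; let `J` be the ideal of `B` corresponding to `I`.
Then the quotient commutative ring `B ⧸ J` carries a bracket, induced by the bracket of `A`
(`⁅f + I, g + I⁆ = ⁅f, g⁆ + I`), which is additive in each argument, antisymmetric, satisfies
the Jacobi identity and the Leibniz rule; hence `B_I/I` is a Poisson algebra and the quotient
map preserves products and brackets. -/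
theorem stmt_5
    {A : Type*} [CommRing A]
    (br : A → A → A)
    (br_add_left : ∀ a b c : A, br (a + b) c = br a c + br b c)
    (br_add_right : ∀ a b c : A, br a (b + c) = br a b + br a c)
    (br_antisymm : ∀ a b : A, br a b = - br b a)
    (br_jacobi : ∀ a b c : A, br a (br b c) + br b (br c a) + br c (br a b) = 0)
    (br_leibniz : ∀ a b c : A, br a (b * c) = br a b * c + b * br a c)
    (I : Ideal A)
    (hI : ∀ i ∈ I, ∀ j ∈ I, br i j ∈ I)
    (B : Subring A) (hB : ∀ f : A, f ∈ B ↔ ∀ i ∈ I, br f i ∈ I)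
    (J : Ideal B) (hJ : ∀ x : B, x ∈ J ↔ (x : A) ∈ I) :
    ∃ br' : (B ⧸ J) → (B ⧸ J) → (B ⧸ J),
      (∀ a b c : B ⧸ J, br' (a + b) c = br' a c + br' b c) ∧
      (∀ a b c : B ⧸ J, br' a (b + c) = br' a b + br' a c) ∧
      (∀ a b : B ⧸ J, br' a b = - br' b a) ∧
      (∀ a b c : B ⧸ J, br' a (br' b c) + br' b (br' c a) + br' c (br' a b) = 0) ∧
      (∀ a b c : B ⧸ J, br' a (b * c) = br' a b * c + b * br' a c) ∧
      (∀ f g : B, ∀ h : br (f : A) (g : A) ∈ B,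
        br' (Ideal.Quotient.mk J f) (Ideal.Quotient.mk J g) =
          Ideal.Quotient.mk J ⟨br (f : A) (g : A), h⟩) ∧
      (∀ f g : B, Ideal.Quotient.mk J (f * g) =
          Ideal.Quotient.mk J f * Ideal.Quotient.mk J g) := by
  -- basic consequences of additivity
  have hz : ∀ a : A, br a 0 = 0 := by
    intro a
    have := br_add_right a 0 0
    simpa using this
  have hzl : ∀ a : A, br 0 a = 0 := by
    intro a
    have := br_add_left 0 0 a
    simpa using this
  have hneg : ∀ a b : A, br a (-b) = - br a b := by
    intro a b
    have h := br_add_right a b (-b)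
    rw [add_neg_cancel, hz] at h
    linear_combination -h
  have hnegl : ∀ a b : A, br (-a) b = - br a b := by
    intro a b
    have h := br_add_left a (-a) b
    rw [add_neg_cancel, hzl] at h
    linear_combination -h
  have hsub : ∀ a b c : A, br (a - b) c = br a c - br b c := by
    intro a b c
    rw [sub_eq_add_neg, br_add_left, hnegl, sub_eq_add_neg]
  -- B is closed under the bracket
  have hBclosed : ∀ x y : B, br (x : A) (y : A) ∈ B := by
    intro x y
    rw [hB]
    intro i hi
    have hx := (hB x).mp x.2
    have hy := (hB y).mp y.2
    have h1 : br (x : A) (br (y : A) i) ∈ I := hx _ (hy i hi)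
    have h2 : br (y : A) (br i (x : A)) ∈ I := by
      have : br i (x : A) = - br (x : A) i := br_antisymm _ _
      rw [this, hneg]
      exact I.neg_mem (hy _ (hx i hi))
    have hj := br_jacobi (x : A) (y : A) i
    have : br i (br (x : A) (y : A)) = - (br (x : A) (br (y : A) i) + br (y : A) (br i (x : A))) := by
      linear_combination hj
    have h3 : br i (br (x : A) (y : A)) ∈ I := by
      rw [this]
      exact I.neg_mem (I.add_mem h1 h2)
    rw [br_antisymm]
    exact I.neg_mem h3
  -- bracket on B
  set brB : B → B → B := fun x y => ⟨br (x : A) (y : A), hBclosed x y⟩ with hbrB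
  -- well-definedness
  have hcong : ∀ x₁ y₁ x₂ y₂ : B, x₁ - x₂ ∈ J → y₁ - y₂ ∈ J →
      brB x₁ y₁ - brB x₂ y₂ ∈ J := by
    intro x₁ y₁ x₂ y₂ hx hy
    rw [hJ] at *
    have hx' : ((x₁ : A) - x₂) ∈ I := hx
    have hy' : ((y₁ : A) - y₂) ∈ I := hy
    have key : br (x₁ : A) (y₁ : A) - br (x₂ : A) (y₂ : A)
        = br ((x₁ : A) - x₂) (y₁ : A) + br (x₂ : A) ((y₁ : A) - y₂) := by
      rw [hsub]
      rw [sub_eq_add_neg (y₁ : A), br_add_right, hneg]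
      ring
    show ((brB x₁ y₁ - brB x₂ y₂ : B) : A) ∈ I
    push_cast [hbrB]
    rw [key]
    refine I.add_mem ?_ ?_
    · rw [br_antisymm]
      exact I.neg_mem ((hB (y₁ : A)).mp y₁.2 _ hx')
    · exact (hB (x₂ : A)).mp x₂.2 _ hy'
  -- define the quotient bracket
  let br' : (B ⧸ J) → (B ⧸ J) → (B ⧸ J) := fun a b =>
    Quotient.liftOn₂ a b (fun x y => Ideal.Quotient.mk J (brB x y))
      (by
        intro a₁ b₁ a₂ b₂ ha hb
        have ha' : a₁ - a₂ ∈ J := (Submodule.quotientRel_def J).mp ha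
        have hb' : b₁ - b₂ ∈ J := (Submodule.quotientRel_def J).mp hb
        exact Ideal.Quotient.eq.mpr (hcong _ _ _ _ ha' hb'))
  have hmk : ∀ x y : B, br' (Ideal.Quotient.mk J x) (Ideal.Quotient.mk J y)
      = Ideal.Quotient.mk J (brB x y) := fun _ _ => rfl
  have hsurj := Ideal.Quotient.mk_surjective (I := J)
  refine ⟨br', ?_, ?_, ?_, ?_, ?_, ?_, ?_⟩
  · intro a b c
    obtain ⟨x, rfl⟩ := hsurj a; obtain ⟨y, rfl⟩ := hsurj b; obtain ⟨z, rfl⟩ := hsurj c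
    rw [← (Ideal.Quotient.mk J).map_add, hmk, hmk, hmk, ← (Ideal.Quotient.mk J).map_add]
    congr 1
    ext
    exact br_add_left _ _ _
  · intro a b c
    obtain ⟨x, rfl⟩ := hsurj a; obtain ⟨y, rfl⟩ := hsurj b; obtain ⟨z, rfl⟩ := hsurj c
    rw [← (Ideal.Quotient.mk J).map_add, hmk, hmk, hmk, ← (Ideal.Quotient.mk J).map_add]
    congr 1
    ext
    exact br_add_right _ _ _
  · intro a b
    obtain ⟨x, rfl⟩ := hsurj a; obtain ⟨y, rfl⟩ := hsurj b
    rw [hmk, hmk, ← (Ideal.Quotient.mk J).map_neg]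
    congr 1
    ext
    exact br_antisymm _ _
  · intro a b c
    obtain ⟨x, rfl⟩ := hsurj a; obtain ⟨y, rfl⟩ := hsurj b; obtain ⟨z, rfl⟩ := hsurj c
    rw [hmk, hmk, hmk, hmk, hmk, hmk, ← (Ideal.Quotient.mk J).map_add, ← (Ideal.Quotient.mk J).map_add]
    have : brB x (brB y z) + brB y (brB z x) + brB z (brB x y) = 0 := by
      ext
      exact br_jacobi _ _ _
    rw [this, (Ideal.Quotient.mk J).map_zero]
  · intro a b c
    obtain ⟨x, rfl⟩ := hsurj a; obtain ⟨y, rfl⟩ := hsurj b; obtain ⟨z, rfl⟩ := hsurj c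
    rw [← (Ideal.Quotient.mk J).map_mul, hmk, hmk, hmk, ← (Ideal.Quotient.mk J).map_mul, ← (Ideal.Quotient.mk J).map_mul, ← (Ideal.Quotient.mk J).map_add]
    congr 1
    ext
    exact br_leibniz _ _ _
  · intro f g h
    exact hmk f g
  · intro f g
    exact map_mul _ f g
end

section
/- Let 𝔤 be a real Lie algebra and let A be a Poisson algebra which is also a real vector space such that the bracket ⁅·,·⁆ is ℝ-bilinear. Let c : 𝔤 → A be a linear map satisfying c([ξ, η]) = ⁅c(ξ), c(η)⁆ for all ξ, η ∈ 𝔤 (the algebraic condition satisfied by the components of the comomentum map associated to a PG-map). Then the ideal of A generated by the image of c is coisotropic: for all f, g in this ideal, ⁅f, g⁆ also lies in it. -/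
/-- Let `𝔤` be a real Lie algebra and `A` a Poisson algebra which is also a
real vector space with ℝ-bilinear bracket.  Let `c : 𝔤 → A` be linear with
`c([ξ, η]) = ⁅c(ξ), c(η)⁆` for all `ξ, η`.  Then the ideal of `A` generated by the image of
`c` is coisotropic. -/
theorem stmt_7
    {L : Type*} [LieRing L] [LieAlgebra ℝ L]
    {A : Type*} [CommRing A] [Algebra ℝ A]
    (br : A → A → A)
    (br_add_left : ∀ a b c : A, br (a + b) c = br a c + br b c)
    (br_add_right : ∀ a b c : A, br a (b + c) = br a b + br a c)
    (br_smul_left : ∀ (r : ℝ) (a b : A), br (r • a) b = r • br a b)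
    (br_smul_right : ∀ (r : ℝ) (a b : A), br a (r • b) = r • br a b)
    (br_antisymm : ∀ a b : A, br a b = - br b a)
    (br_jacobi : ∀ a b c : A, br a (br b c) + br b (br c a) + br c (br a b) = 0)
    (br_leibniz : ∀ a b c : A, br a (b * c) = br a b * c + b * br a c)
    (c : L →ₗ[ℝ] A)
    (hc : ∀ ξ η : L, c ⁅ξ, η⁆ = br (c ξ) (c η)) :
    ∀ f ∈ Ideal.span (Set.range ⇑c), ∀ g ∈ Ideal.span (Set.range ⇑c),
      br f g ∈ Ideal.span (Set.range ⇑c) := by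
  set I := Ideal.span (Set.range ⇑c) with hI
  have br_zero_right : ∀ a : A, br a 0 = 0 := by
    intro a
    have h : br a 0 = br a 0 + br a 0 := by simpa using br_add_right a 0 0
    exact right_eq_add.mp h
  have br_zero_left : ∀ a : A, br 0 a = 0 := by
    intro a
    rw [br_antisymm, br_zero_right, neg_zero]
  -- Step 1: for x in the range, br x g ∈ I for all g ∈ I
  have key : ∀ ξ : L, ∀ g ∈ I, br (c ξ) g ∈ I := by
    intro ξ g hg
    induction hg using Submodule.span_induction with
    | mem y hy =>
      obtain ⟨η, rfl⟩ := hy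
      rw [← hc]
      exact Ideal.subset_span ⟨_, rfl⟩
    | zero => rw [br_zero_right]; exact I.zero_mem
    | add a b _ _ ha hb => rw [br_add_right]; exact I.add_mem ha hb
    | smul a b hb ihb =>
      rw [smul_eq_mul, br_leibniz]
      exact I.add_mem (I.mul_mem_left _ hb) (I.mul_mem_left _ ihb)
  -- Step 2: general f
  intro f hf g hg
  induction hf using Submodule.span_induction with
  | mem y hy =>
    obtain ⟨ξ, rfl⟩ := hy
    exact key ξ g hg
  | zero => rw [br_zero_left]; exact I.zero_mem
  | add a b _ _ ha hb => rw [br_add_left]; exact I.add_mem ha hb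
  | smul a b hb ihb =>
    have : br (a • b) g = -(br g a * b) + a * br b g := by
      rw [smul_eq_mul, br_antisymm, br_leibniz]
      have h1 : br g b = - br b g := by rw [br_antisymm]
      rw [h1]
      ring
    rw [this]
    exact I.add_mem (I.neg_mem (I.mul_mem_left _ hb)) (I.mul_mem_left _ ihb)
end

section
/- Let E be a real normed vector space and let θ : E → (E →L[ℝ] ℝ) be a map that is differentiable at a point q ∈ E. Define the function F : E × E → ℝ by F(p, v) = θ(p)(v), and define the exterior derivative of θ at q as the bilinear form dθ(q)(a, b) = (Dθ(q)(a))(b) − (Dθ(q)(b))(a). Then the complete lift d_T θ := i_T dθ + d(i_T θ), i.e. the 1-form on E × E whose value at (q, v) on (w, u) is dθ(q)(v, w) + DF(q, v)(w, u), satisfies for all v, w, u ∈ E: dθ(q)(v, w) + DF(q, v)(w, u) = (Dθ(q)(v))(w) + θ(q)(u). -/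
/-- Let `E` be a real normed vector space and `θ : E → (E →L[ℝ] ℝ)`
differentiable at `q`.  With `F (p, v) = θ p v` and
`dθ(q)(a, b) = (Dθ(q)(a))(b) − (Dθ(q)(b))(a)`, the complete lift
`d_T θ = i_T dθ + d(i_T θ)`, whose value at `(q, v)` on `(w, u)` is
`dθ(q)(v, w) + DF(q, v)(w, u)`, satisfies
`dθ(q)(v, w) + DF(q, v)(w, u) = (Dθ(q)(v))(w) + θ(q)(u)` for all `v, w, u`. -/
theorem stmt_9
    {E : Type*} [NormedAddCommGroup E] [NormedSpace ℝ E]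
    (θ : E → (E →L[ℝ] ℝ)) (q : E)
    (hθ : DifferentiableAt ℝ θ q)
    (F : E × E → ℝ) (hF : ∀ p : E × E, F p = θ p.1 p.2)
    (dθ : E → E → ℝ)
    (hdθ : ∀ a b : E, dθ a b = fderiv ℝ θ q a b - fderiv ℝ θ q b a) :
    ∀ v w u : E, dθ v w + fderiv ℝ F (q, v) (w, u) = fderiv ℝ θ q v w + θ q u := by
  intro v w u
  have hg : HasFDerivAt (fun p : E × E => θ p.1)
      ((fderiv ℝ θ q).comp (ContinuousLinearMap.fst ℝ E E)) (q, v) :=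
    hθ.hasFDerivAt.comp (q, v) (hasFDerivAt_fst)
  have hc : HasFDerivAt (fun p : E × E => p.2)
      (ContinuousLinearMap.snd ℝ E E) (q, v) := hasFDerivAt_snd
  have hFeq : F = fun p : E × E => (θ p.1) p.2 := funext hF
  have h := (hg.clm_apply hc).fderiv
  rw [hFeq, h, hdθ]
  simp
end
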